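/- Let E be an infinite-dimensional closed *-subalgebra of s (closed in the topology of s, closed under pointwise multiplication and complex conjugation). Then there exists a family {N_k}_{k∈ℕ} of finite nonempty pairwise disjoint subsets of ℕ such that E = {ξ ∈ s : ξ_i = ξ_j whenever i, j ∈ N_k for some k, and ξ_j = 0 for every j ∉ ⋃_{k∈ℕ} N_k}; in particular each e_{N_k} belongs to E and E is the closed linear span of {e_{N_k} : k ∈ ℕ}. -/

import Mathlib

noncomputable section

/-- Membership in the space `s` of rapidly decreasing sequences (the paper's index
`j ∈ {1,2,...}` corresponds to `j+1` here). -/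
def inS (ξ : ℕ → ℂ) : Prop :=
  ∀ q : ℕ, Summable fun j : ℕ => ‖ξ j‖ ^ 2 * ((j : ℝ) + 1) ^ (2 * q)

/-- The `q`-th norm `|ξ|_q` on `s`. -/
def sNorm (q : ℕ) (ξ : ℕ → ℂ) : ℝ :=
  Real.sqrt (∑' j : ℕ, ‖ξ j‖ ^ 2 * ((j : ℝ) + 1) ^ (2 * q))

/-- The characteristic sequence `e_N` of a set `N ⊆ ℕ`. -/
def eNset (N : Finset ℕ) : ℕ → ℂ := fun j => if j ∈ N then 1 else 0

/-- Let `E` be an infinite-dimensional closed *-subalgebra of `s`. Then there is a family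
`{N_k}` of finite nonempty pairwise disjoint subsets of `ℕ` such that `E` consists exactly
of those `ξ ∈ s` that are constant on each `N_k` and vanish off `⋃_k N_k`; in particular
each `e_{N_k} ∈ E` and `E` is the closed linear span of `{e_{N_k} : k ∈ ℕ}`. -/
def sRel (E : Set (ℕ → ℂ)) (i j : ℕ) : Prop := ∀ ξ ∈ E, ξ i = ξ j

open Filter

lemma inS_of_finsupp (ξ : ℕ → ℂ) (F : Finset ℕ) (h : ∀ j ∉ F, ξ j = 0) : inS ξ := by
  intro q
  apply summable_of_ne_finset_zero (s := F)
  intro j hj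
  simp [h j hj]

lemma sNorm_lt (q : ℕ) (f : ℕ → ℂ) (ε : ℝ) (hε : 0 < ε) (h : ℕ → ℝ)
    (hsum : Summable h)
    (hb : ∀ j, ‖f j‖ ^ 2 * ((j : ℝ) + 1) ^ (2 * q) ≤ h j)
    (ht : ∑' j, h j < ε ^ 2) : sNorm q f < ε := by
  have h0 : ∀ j, 0 ≤ ‖f j‖ ^ 2 * ((j : ℝ) + 1) ^ (2 * q) := fun j => by positivity
  have hs : Summable fun j : ℕ => ‖f j‖ ^ 2 * ((j : ℝ) + 1) ^ (2 * q) :=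
    Summable.of_nonneg_of_le h0 hb hsum
  rw [sNorm, Real.sqrt_lt' hε]
  exact lt_of_le_of_lt (Summable.tsum_le_tsum hb hs hsum) ht

lemma finite_level {ξ : ℕ → ℂ} (h : inS ξ) {δ : ℝ} (hδ : 0 < δ) :
    {j : ℕ | δ ≤ ‖ξ j‖ ^ 2}.Finite := by
  have h0 : Summable fun j : ℕ => ‖ξ j‖ ^ 2 := by
    have := h 0
    simpa using this
  have ht : Tendsto (fun j : ℕ => ‖ξ j‖ ^ 2) atTop (nhds 0) := h0.tendsto_atTop_zero
  obtain ⟨n, hn⟩ := Filter.eventually_atTop.1 (ht.eventually (gt_mem_nhds hδ))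
  apply Set.Finite.subset (Set.finite_Iio n)
  intro j hj
  by_contra hlt
  simp only [Set.mem_Iio, not_lt] at hlt
  exact absurd (hn j hlt) (not_lt.2 hj)

lemma eNset_inter (A B : Finset ℕ) : eNset (A ∩ B) = eNset A * eNset B := by
  funext j
  by_cases hA : j ∈ A <;> by_cases hB : j ∈ B <;>
    simp [eNset, hA, hB, Finset.mem_inter]

open Polynomial in
theorem polyEval_mem {E : Set (ℕ → ℂ)}
    (hadd : ∀ ξ ∈ E, ∀ η ∈ E, ξ + η ∈ E)
    (hsmul : ∀ (c : ℂ), ∀ ξ ∈ E, c • ξ ∈ E)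
    (hmul : ∀ ξ ∈ E, ∀ η ∈ E, ξ * η ∈ E)
    {ζ : ℕ → ℂ} (hζ : ζ ∈ E) (Q : Polynomial ℂ) :
    (fun j => ζ j * Q.eval (ζ j)) ∈ E := by
  have hpow : ∀ n : ℕ, (fun j => ζ j ^ (n + 1)) ∈ E := by
    intro n
    induction n with
    | zero => simpa using hζ
    | succ n ih =>
        have e : (fun j => ζ j ^ (n + 1 + 1)) = (fun j => ζ j ^ (n + 1)) * ζ := by
          funext j; simp [pow_succ]
        rw [e]; exact hmul _ ih _ hζ
  induction Q using Polynomial.induction_on with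
  | C a =>
      have e : (fun j => ζ j * (C a).eval (ζ j)) = a • ζ := by
        funext j; simp [mul_comm]
      rw [e]; exact hsmul a ζ hζ
  | add p q hp hq =>
      have e : (fun j => ζ j * (p + q).eval (ζ j)) =
          (fun j => ζ j * p.eval (ζ j)) + (fun j => ζ j * q.eval (ζ j)) := by
        funext j; simp [mul_add]
      rw [e]; exact hadd _ hp _ hq
  | monomial n a _ =>
      have e : (fun j => ζ j * (C a * X ^ (n + 1)).eval (ζ j)) =
          a • (fun j => ζ j ^ (n + 1 + 1)) := by
        funext j; simp [Pi.smul_apply]; ring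
      rw [e]; exact hsmul a _ (hpow (n + 1))


section
open Polynomial
variable {E : Set (ℕ → ℂ)}
theorem level_indicator
    (hEsub : ∀ ξ ∈ E, inS ξ)
    (hadd : ∀ ξ ∈ E, ∀ η ∈ E, ξ + η ∈ E)
    (hsmul : ∀ (c : ℂ), ∀ ξ ∈ E, c • ξ ∈ E)
    (hmul : ∀ ξ ∈ E, ∀ η ∈ E, ξ * η ∈ E)
    (hstar : ∀ ξ ∈ E, star ξ ∈ E)
    (hclosed : ∀ ξ : ℕ → ℂ, inS ξ →
      (∀ q : ℕ, ∀ ε : ℝ, 0 < ε → ∃ η ∈ E, sNorm q (ξ - η) < ε) → ξ ∈ E)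
    {ξ : ℕ → ℂ} (hξ : ξ ∈ E) (i₀ : ℕ) (h0 : ξ i₀ ≠ 0) :
    ∃ L : Finset ℕ, (↑L : Set ℕ) = {j | Complex.normSq (ξ j) = Complex.normSq (ξ i₀)} ∧
      eNset L ∈ E := by
  classical
  set w : ℕ → ℝ := fun j => Complex.normSq (ξ j) with hw
  set a : ℝ := w i₀ with hadef
  have ha : 0 < a := Complex.normSq_pos.2 h0
  have hζE : ξ * star ξ ∈ E := hmul ξ hξ _ (hstar ξ hξ)
  set ζ : ℕ → ℂ := ξ * star ξ with hζdef
  have hζval : ∀ j, ζ j = (w j : ℂ) := by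
    intro j
    simp [hζdef, hw, Complex.star_def, Complex.mul_conj]
  have hζnorm : ∀ j, ‖ζ j‖ = w j := by
    intro j
    rw [hζval]
    simp [abs_of_nonneg (Complex.normSq_nonneg _)]
    exact Complex.normSq_nonneg _
  have hw0 : ∀ j, 0 ≤ w j := fun j => Complex.normSq_nonneg _
  have hwval : ∀ j, w j = ‖ξ j‖ ^ 2 := fun j => by
    simp [hw, Complex.normSq_eq_norm_sq]
  have hfin : {j | a / 2 ≤ w j}.Finite := by
    have h1 := finite_level (hEsub ξ hξ) (half_pos ha)
    have e : {j : ℕ | a / 2 ≤ w j} = {j : ℕ | a / 2 ≤ ‖ξ j‖ ^ 2} := by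
      ext j; simp only [Set.mem_setOf_eq, hwval]
    rw [e]; exact h1
  set B : Finset ℕ := hfin.toFinset with hB
  have hBmem : ∀ j, j ∈ B ↔ a / 2 ≤ w j := by
    intro j; rw [hB, Set.Finite.mem_toFinset]; rfl
  set V' : Finset ℝ := (B.image w).erase a with hV'
  have hV'mem : ∀ v ∈ V', a / 2 ≤ v ∧ v ≠ a := by
    intro v hv
    rw [hV', Finset.mem_erase] at hv
    obtain ⟨hvne, hvim⟩ := hv
    obtain ⟨j, hj, rfl⟩ := Finset.mem_image.1 hvim
    exact ⟨(hBmem j).1 hj, hvne⟩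
  set L : Finset ℕ := B.filter (fun j => w j = a) with hLdef
  have hLmem : ∀ j, j ∈ L ↔ w j = a := by
    intro j
    rw [hLdef, Finset.mem_filter, hBmem]
    constructor
    · rintro ⟨_, h⟩; exact h
    · intro h; exact ⟨by rw [h]; linarith, h⟩
  -- constants
  set Pd : ℝ := ∏ v ∈ V', |a - v| with hPddef
  set Pv : ℝ := ∏ v ∈ V', v with hPvdef
  have hPd : 0 < Pd := Finset.prod_pos fun v hv => abs_pos.2 (sub_ne_zero.2 (Ne.symm (hV'mem v hv).2))
  have hPv : 0 ≤ Pv := Finset.prod_nonneg fun v hv => le_trans (by linarith) (hV'mem v hv).1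
  set c : ℕ → ℂ := fun m => ((a : ℂ) ^ (m + 1) * ∏ v ∈ V', ((a : ℂ) - (v : ℂ)))⁻¹ with hc
  have hden : ∀ m : ℕ, ((a : ℂ) ^ (m + 1) * ∏ v ∈ V', ((a : ℂ) - (v : ℂ))) ≠ 0 := by
    intro m
    apply mul_ne_zero
    · exact pow_ne_zero _ (by exact_mod_cast ha.ne')
    · exact Finset.prod_ne_zero_iff.2 fun v hv => sub_ne_zero.2
        (by exact_mod_cast (Ne.symm (hV'mem v hv).2))
  set g : ℕ → ℕ → ℂ := fun m j =>
    ζ j * (C (c m) * (X ^ m * ∏ v ∈ V', (X - C (v : ℂ)))).eval (ζ j) with hg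
  have hgE : ∀ m, (fun j => g m j) ∈ E := fun m => polyEval_mem hadd hsmul hmul hζE _
  have hgeval : ∀ m j, g m j = c m * ((w j : ℂ) ^ (m + 1) * ∏ v ∈ V', ((w j : ℂ) - v)) := by
    intro m j
    rw [hg]
    simp only [hζval j, eval_mul, eval_C, eval_pow, eval_X, eval_prod, eval_sub]
    ring
  have hg_at_L : ∀ m, ∀ j ∈ L, g m j = 1 := by
    intro m j hj
    rw [hgeval, (hLmem j).1 hj]
    exact inv_mul_cancel₀ (hden m)
  have hg_at_B : ∀ m, ∀ j ∈ B, j ∉ L → g m j = 0 := by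
    intro m j hjB hjL
    have hwa : w j ≠ a := fun h => hjL ((hLmem j).2 h)
    have hjV' : w j ∈ V' := by
      rw [hV', Finset.mem_erase]
      exact ⟨hwa, Finset.mem_image_of_mem w hjB⟩
    rw [hgeval]
    rw [Finset.prod_eq_zero hjV' (by simp)]
    ring
  set D : ℕ → ℝ := fun m => ‖c m‖ * ((a / 2) ^ m * Pv) with hD
  have hD0 : ∀ m, 0 ≤ D m := by
    intro m
    apply mul_nonneg (norm_nonneg _)
    exact mul_nonneg (pow_nonneg (by linarith) m) hPv
  have hkey : ∀ m j, ‖(eNset L - fun j => g m j) j‖ ≤ D m * w j := by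
    intro m j
    rw [Pi.sub_apply]
    by_cases hjL : j ∈ L
    · rw [hg_at_L m j hjL]
      simp only [eNset, if_pos hjL, sub_self, norm_zero]
      exact mul_nonneg (hD0 m) (hw0 j)
    · by_cases hjB : j ∈ B
      · rw [hg_at_B m j hjB hjL]
        simp only [eNset, if_neg hjL, sub_zero, norm_zero]
        exact mul_nonneg (hD0 m) (hw0 j)
      · have hwj : w j < a / 2 := lt_of_not_ge (fun h => hjB ((hBmem j).2 h))
        have : eNset L j = 0 := by simp [eNset, hjL]
        rw [this, zero_sub, norm_neg, hgeval]
        rw [norm_mul, norm_mul, norm_pow, norm_prod]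
        have h1 : ‖((w j : ℝ) : ℂ)‖ = w j := by
          simp [abs_of_nonneg (hw0 j)]
        rw [h1]
        have h2 : ∏ v ∈ V', ‖((w j : ℝ) : ℂ) - (v : ℂ)‖ ≤ Pv := by
          apply Finset.prod_le_prod (fun v _ => norm_nonneg _)
          intro v hv
          have hv2 := hV'mem v hv
          have : ((w j : ℝ) : ℂ) - (v : ℂ) = ((w j - v : ℝ) : ℂ) := by push_cast; ring
          rw [this]
          rw [Complex.norm_real, Real.norm_eq_abs, abs_of_nonpos (by linarith)]
          linarith [hw0 j]
        have h3 : w j ^ (m + 1) ≤ w j * (a / 2) ^ m := by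
          rw [pow_succ']
          apply mul_le_mul_of_nonneg_left _ (hw0 j)
          exact pow_le_pow_left₀ (hw0 j) (by linarith) m
        calc ‖c m‖ * (w j ^ (m + 1) * ∏ v ∈ V', ‖((w j : ℝ) : ℂ) - (v : ℂ)‖)
            ≤ ‖c m‖ * ((w j * (a / 2) ^ m) * Pv) := by
              apply mul_le_mul_of_nonneg_left _ (norm_nonneg _)
              apply mul_le_mul h3 h2 (Finset.prod_nonneg fun v _ => norm_nonneg _)
              exact mul_nonneg (hw0 j) (pow_nonneg (by linarith) m)
          _ = D m * w j := by rw [hD]; ring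
  have hcnorm : ∀ m, ‖c m‖ = (a ^ (m + 1) * Pd)⁻¹ := by
    intro m
    rw [hc]
    rw [norm_inv, norm_mul, norm_pow]
    congr 2
    · simp [abs_of_pos ha]
    · rw [norm_prod, hPddef]
      apply Finset.prod_congr rfl
      intro v _
      have : ((a : ℝ) : ℂ) - (v : ℂ) = ((a - v : ℝ) : ℂ) := by push_cast; ring
      rw [this, Complex.norm_real, Real.norm_eq_abs]
  have hDeq : ∀ m, D m = (Pv / (a * Pd)) * (1 / 2) ^ m := by
    intro m
    show ‖c m‖ * ((a / 2) ^ m * Pv) = Pv / (a * Pd) * (1 / 2) ^ m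
    rw [hcnorm]
    rw [div_pow, div_pow]
    field_simp
    ring
  have hDlim : Tendsto D atTop (nhds 0) := by
    have h1 : Tendsto (fun m : ℕ => (Pv / (a * Pd)) * (1 / 2 : ℝ) ^ m) atTop
        (nhds ((Pv / (a * Pd)) * 0)) :=
      (tendsto_pow_atTop_nhds_zero_of_lt_one (by norm_num) (by norm_num)).const_mul _
    rw [mul_zero] at h1
    exact h1.congr fun m => (hDeq m).symm
  refine ⟨L, ?_, ?_⟩
  · ext j
    simp only [Finset.coe_filter, Set.mem_setOf_eq, Finset.mem_coe]
    rw [hLmem j]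
  · apply hclosed _ (inS_of_finsupp _ L (fun j hj => by simp [eNset, hj]))
    intro q ε hε
    have hTsum : Summable fun j : ℕ => ‖ζ j‖ ^ 2 * ((j : ℝ) + 1) ^ (2 * q) := hEsub ζ hζE q
    set T : ℝ := ∑' j : ℕ, ‖ζ j‖ ^ 2 * ((j : ℝ) + 1) ^ (2 * q) with hT
    have hT0 : 0 ≤ T := tsum_nonneg fun j => by positivity
    have hlim2 : Tendsto (fun m => D m ^ 2 * T) atTop (nhds 0) := by
      have h2 := (hDlim.mul hDlim).mul_const T
      simp only [mul_zero, zero_mul] at h2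
      exact h2.congr fun k => by ring
    obtain ⟨m, hm⟩ := (hlim2.eventually (gt_mem_nhds (show (0:ℝ) < ε ^ 2 by positivity))).exists
    refine ⟨fun j => g m j, hgE m, ?_⟩
    apply sNorm_lt q _ ε hε (fun j => D m ^ 2 * (‖ζ j‖ ^ 2 * ((j : ℝ) + 1) ^ (2 * q)))
      (hTsum.mul_left _)
    · intro j
      have h1 : ‖(eNset L - fun j => g m j) j‖ ≤ D m * ‖ζ j‖ := by
        rw [hζnorm]; exact hkey m j
      calc ‖(eNset L - fun j => g m j) j‖ ^ 2 * ((j : ℝ) + 1) ^ (2 * q)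
          ≤ (D m * ‖ζ j‖) ^ 2 * ((j : ℝ) + 1) ^ (2 * q) := by
            apply mul_le_mul_of_nonneg_right _ (by positivity)
            exact pow_le_pow_left₀ (norm_nonneg _) h1 2
        _ = D m ^ 2 * (‖ζ j‖ ^ 2 * ((j : ℝ) + 1) ^ (2 * q)) := by ring
    · rw [tsum_mul_left]
      exact hm
end

theorem class_indicator {E : Set (ℕ → ℂ)}
    (hEsub : ∀ ξ ∈ E, inS ξ)
    (hadd : ∀ ξ ∈ E, ∀ η ∈ E, ξ + η ∈ E)
    (hsmul : ∀ (c : ℂ), ∀ ξ ∈ E, c • ξ ∈ E)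
    (hmul : ∀ ξ ∈ E, ∀ η ∈ E, ξ * η ∈ E)
    (hstar : ∀ ξ ∈ E, star ξ ∈ E)
    (hclosed : ∀ ξ : ℕ → ℂ, inS ξ →
      (∀ q : ℕ, ∀ ε : ℝ, 0 < ε → ∃ η ∈ E, sNorm q (ξ - η) < ε) → ξ ∈ E)
    (i₀ : ℕ) {ξ : ℕ → ℂ} (hξ : ξ ∈ E) (h0 : ξ i₀ ≠ 0) :
    ∃ N : Finset ℕ, (↑N : Set ℕ) = {j | sRel E i₀ j} ∧ eNset N ∈ E := by
  classical
  have hrefl : sRel E i₀ i₀ := fun η _ => rfl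
  obtain ⟨L, hLset, hLmem⟩ := level_indicator hEsub hadd hsmul hmul hstar hclosed hξ i₀ h0
  have hclsL : {j | sRel E i₀ j} ⊆ (↑L : Set ℕ) := by
    intro j hj
    rw [hLset]
    exact congrArg Complex.normSq (hj ξ hξ).symm
  suffices main : ∀ n (K : Finset ℕ), K.card ≤ n → eNset K ∈ E →
      {j | sRel E i₀ j} ⊆ (↑K : Set ℕ) →
      ∃ N : Finset ℕ, (↑N : Set ℕ) = {j | sRel E i₀ j} ∧ eNset N ∈ E by
    exact main L.card L le_rfl hLmem hclsL
  intro n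
  induction n with
  | zero =>
      intro K hc hKE hsub
      exfalso
      have hK : K = ∅ := Finset.card_eq_zero.1 (Nat.le_zero.1 hc)
      have := hsub hrefl
      rw [hK] at this
      simpa using this
  | succ n ih =>
      intro K hc hKE hsub
      by_cases hEq : (↑K : Set ℕ) = {j | sRel E i₀ j}
      · exact ⟨K, hEq, hKE⟩
      · have hex : ∃ j ∈ K, ¬ sRel E i₀ j := by
          by_contra h
          push_neg at h
          exact hEq (Set.Subset.antisymm (fun j hj => h j hj) hsub)
        obtain ⟨j, hjK, hjn⟩ := hex
        rw [sRel] at hjn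
        push_neg at hjn
        obtain ⟨η, hη, hne⟩ := hjn
        have hi₀K : i₀ ∈ K := hsub hrefl
        set θ : ℕ → ℂ := eNset K * (η + (-(η j)) • eNset K) with hθdef
        have hθE : θ ∈ E := hmul _ hKE _ (hadd _ hη _ (hsmul _ _ hKE))
        have hθval : ∀ m ∈ K, θ m = η m - η j := by
          intro m hm
          simp [hθdef, eNset, hm, sub_eq_add_neg]
        have hθi₀ : θ i₀ ≠ 0 := by
          rw [hθval i₀ hi₀K]
          exact sub_ne_zero.2 hne
        obtain ⟨L', hL'set, hL'mem⟩ :=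
          level_indicator hEsub hadd hsmul hmul hstar hclosed hθE i₀ hθi₀
        set K' : Finset ℕ := K ∩ L' with hK'
        have hK'E : eNset K' ∈ E := by
          rw [hK', eNset_inter]
          exact hmul _ hKE _ hL'mem
        have hsub' : {j | sRel E i₀ j} ⊆ (↑K' : Set ℕ) := by
          intro m hm
          rw [hK']
          simp only [Finset.coe_inter, Set.mem_inter_iff, Finset.mem_coe]
          refine ⟨hsub hm, ?_⟩
          have : θ m = θ i₀ := by
            rw [hθval m (hsub hm), hθval i₀ hi₀K, (hm η hη).symm]
          have h2 : m ∈ (↑L' : Set ℕ) := by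
            rw [hL'set]
            exact congrArg Complex.normSq this
          exact h2
        have hjK' : j ∉ K' := by
          rw [hK', Finset.mem_inter]
          rintro ⟨-, hjL'⟩
          have : (j : ℕ) ∈ (↑L' : Set ℕ) := hjL'
          rw [hL'set] at this
          simp only [Set.mem_setOf_eq] at this
          have hθj : θ j = 0 := by rw [hθval j hjK]; ring
          rw [hθj, map_zero] at this
          exact hθi₀ (Complex.normSq_eq_zero.1 this.symm)
        have hcard : K'.card < K.card := by
          apply Finset.card_lt_card
          rw [Finset.ssubset_iff_of_subset (Finset.inter_subset_left)]
          exact ⟨j, hjK, hjK'⟩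
        exact ih K' (by omega) hK'E hsub'


theorem stmt_6 (E : Set (ℕ → ℂ))
    (hEsub : ∀ ξ ∈ E, inS ξ)
    (hadd : ∀ ξ ∈ E, ∀ η ∈ E, ξ + η ∈ E)
    (hsmul : ∀ (c : ℂ), ∀ ξ ∈ E, c • ξ ∈ E)
    (hmul : ∀ ξ ∈ E, ∀ η ∈ E, ξ * η ∈ E)
    (hstar : ∀ ξ ∈ E, star ξ ∈ E)
    (hclosed : ∀ ξ : ℕ → ℂ, inS ξ →
      (∀ q : ℕ, ∀ ε : ℝ, 0 < ε → ∃ η ∈ E, sNorm q (ξ - η) < ε) → ξ ∈ E)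
    (hinfdim : ¬ ∃ t : Finset (ℕ → ℂ),
      E ⊆ (Submodule.span ℂ (t : Set (ℕ → ℂ)) : Set (ℕ → ℂ))) :
    ∃ N : ℕ → Finset ℕ, (∀ k, (N k).Nonempty) ∧
      (∀ k l, k ≠ l → Disjoint (N k) (N l)) ∧
      E = {ξ : ℕ → ℂ | inS ξ ∧ (∀ k, ∀ i ∈ N k, ∀ j ∈ N k, ξ i = ξ j) ∧
            (∀ j : ℕ, (∀ k, j ∉ N k) → ξ j = 0)} ∧
      (∀ k, eNset (N k) ∈ E) ∧
      E = {ξ : ℕ → ℂ | inS ξ ∧ ∀ q : ℕ, ∀ ε : ℝ, 0 < ε →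
            ∃ η ∈ (Submodule.span ℂ (Set.range fun k => eNset (N k)) : Set (ℕ → ℂ)),
              sNorm q (ξ - η) < ε} := by
  classical
  have hne : E.Nonempty := by
    rcases Set.eq_empty_or_nonempty E with h | h
    · exact absurd ⟨∅, by rw [h]; exact Set.empty_subset _⟩ hinfdim
    · exact h
  obtain ⟨ξ₀, hξ₀⟩ := hne
  have hzero : (0 : ℕ → ℂ) ∈ E := by simpa using hsmul 0 ξ₀ hξ₀
  set S : Set ℕ := {j | ∃ ξ ∈ E, ξ j ≠ 0} with hS
  set cls : ℕ → Set ℕ := fun i => {j | sRel E i j} with hcls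
  have hrefl : ∀ i, sRel E i i := fun i ξ _ => rfl
  have hsymm : ∀ {i j}, sRel E i j → sRel E j i := fun h ξ hξ => (h ξ hξ).symm
  have htrans : ∀ {i j k}, sRel E i j → sRel E j k → sRel E i k :=
    fun h1 h2 ξ hξ => (h1 ξ hξ).trans (h2 ξ hξ)
  have hclsmem : ∀ i j, j ∈ cls i ↔ sRel E i j := fun i j => Iff.rfl
  have hclsfin : ∀ i ∈ S, (cls i).Finite := by
    rintro i ⟨ξ, hξ, h0⟩
    have hδ : 0 < ‖ξ i‖ ^ 2 := pow_pos (norm_pos_iff.2 h0) 2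
    apply Set.Finite.subset (finite_level (hEsub ξ hξ) hδ)
    intro j hj
    have h1 : ξ i = ξ j := hj ξ hξ
    have h2 : ‖ξ i‖ ^ 2 = ‖ξ j‖ ^ 2 := by rw [h1]
    exact le_of_eq h2
  have hclsS : ∀ i ∈ S, cls i ⊆ S := by
    rintro i ⟨ξ, hξ, h0⟩ j hj
    exact ⟨ξ, hξ, by rw [← hj ξ hξ]; exact h0⟩
  set M : Set ℕ := {i | i ∈ S ∧ ∀ j ∈ cls i, i ≤ j} with hM
  have hclseq : ∀ {i j}, sRel E i j → cls i = cls j := by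
    intro i j hij
    ext m
    exact ⟨fun h => htrans (hsymm hij) h, fun h => htrans hij h⟩
  have hMex : ∀ j ∈ S, ∃ i, i ∈ M ∧ sRel E i j := by
    intro j hj
    have hfin := hclsfin j hj
    have hjmem : j ∈ hfin.toFinset := by
      rw [Set.Finite.mem_toFinset]; exact hrefl j
    set i := hfin.toFinset.min' ⟨j, hjmem⟩ with hi
    have hiMem : i ∈ cls j := by
      rw [← Set.Finite.mem_toFinset hfin]; exact Finset.min'_mem _ _
    have hij : sRel E i j := hsymm hiMem
    refine ⟨i, ⟨hclsS j hj hiMem, ?_⟩, hij⟩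
    intro m hm
    have hmj : m ∈ cls j := by rw [← hclseq hij]; exact hm
    exact Finset.min'_le _ m (by rw [Set.Finite.mem_toFinset]; exact hmj)
  have hMuniq : ∀ i₁ ∈ M, ∀ i₂ ∈ M, ∀ j, sRel E i₁ j → sRel E i₂ j → i₁ = i₂ := by
    intro i₁ h₁ i₂ h₂ j hj₁ hj₂
    have h12 : sRel E i₁ i₂ := htrans hj₁ (hsymm hj₂)
    have a := h₁.2 i₂ h12
    have b := h₂.2 i₁ (hsymm h12)
    omega
  have hMinf : M.Infinite := by
    by_contra hfin
    rw [Set.not_infinite] at hfin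
    apply hinfdim
    set clsF : ℕ → Finset ℕ := fun i => if h : (cls i).Finite then h.toFinset else ∅ with hclsF
    have hclsFmem : ∀ i ∈ S, ∀ j, j ∈ clsF i ↔ sRel E i j := by
      intro i hi j
      rw [hclsF]
      simp only [dif_pos (hclsfin i hi), Set.Finite.mem_toFinset]
      exact hclsmem i j
    refine ⟨hfin.toFinset.image (fun i => eNset (clsF i)), ?_⟩
    intro ξ hξ
    have hrepr : ξ = ∑ i ∈ hfin.toFinset, ξ i • eNset (clsF i) := by
      funext j
      rw [Finset.sum_apply]
      by_cases hjS : j ∈ S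
      · obtain ⟨i₁, hi₁M, hi₁rel⟩ := hMex j hjS
        rw [Finset.sum_eq_single_of_mem i₁ (by rw [Set.Finite.mem_toFinset]; exact hi₁M)]
        · have hjc : j ∈ clsF i₁ := (hclsFmem i₁ hi₁M.1 j).2 hi₁rel
          simp only [Pi.smul_apply, eNset, if_pos hjc, smul_eq_mul, mul_one]
          exact (hi₁rel ξ hξ).symm
        · intro i hiM hnei
          rw [Set.Finite.mem_toFinset] at hiM
          have hjc : j ∉ clsF i := by
            intro hj
            exact hnei (hMuniq i hiM i₁ hi₁M j ((hclsFmem i hiM.1 j).1 hj) hi₁rel)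
          simp [eNset, hjc]
      · have hξj : ξ j = 0 := by
          by_contra h; exact hjS ⟨ξ, hξ, h⟩
        rw [hξj]
        symm
        apply Finset.sum_eq_zero
        intro i hi
        rw [Set.Finite.mem_toFinset] at hi
        by_cases hj : j ∈ clsF i
        · have hrel : sRel E i j := (hclsFmem i hi.1 j).1 hj
          simp only [Pi.smul_apply, eNset, if_pos hj, smul_eq_mul, mul_one]
          rw [hrel ξ hξ, hξj]
        · simp [eNset, hj]
    rw [hrepr]
    apply Submodule.sum_mem
    intro i hi
    apply Submodule.smul_mem
    apply Submodule.subset_span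
    exact Finset.mem_coe.2 (Finset.mem_image_of_mem _ hi)
  set p : ℕ → Prop := fun i => i ∈ M with hp
  have hpinf : (setOf p).Infinite := hMinf
  set nth : ℕ → ℕ := Nat.nth p with hnth
  have hnthM : ∀ k, nth k ∈ M := fun k => Nat.nth_mem_of_infinite hpinf k
  have hnthle : ∀ k, k ≤ nth k := fun k => (Nat.nth_strictMono hpinf).le_apply
  have hnthinj : Function.Injective nth := (Nat.nth_strictMono hpinf).injective
  set N : ℕ → Finset ℕ := fun k => (hclsfin _ (hnthM k).1).toFinset with hN
  have hNmem : ∀ k j, j ∈ N k ↔ sRel E (nth k) j := by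
    intro k j
    rw [hN]
    simp only [Set.Finite.mem_toFinset]
    exact hclsmem _ j
  have hNdisj : ∀ k l, k ≠ l → Disjoint (N k) (N l) := by
    intro k l hkl
    rw [Finset.disjoint_left]
    intro j h1 h2
    exact hkl (hnthinj (hMuniq _ (hnthM k) _ (hnthM l) j ((hNmem k j).1 h1) ((hNmem l j).1 h2)))
  have hNE : ∀ k, eNset (N k) ∈ E := by
    intro k
    obtain ⟨ξ, hξ, h0⟩ := (hnthM k).1
    obtain ⟨N', hN'coe, hN'mem⟩ :=
      class_indicator hEsub hadd hsmul hmul hstar hclosed (nth k) hξ h0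
    have hcoe : (↑(N k) : Set ℕ) = {j | sRel E (nth k) j} := by
      ext j
      rw [Finset.mem_coe, hNmem k j]
      rfl
    have heq : N' = N k := Finset.coe_injective (hN'coe.trans hcoe.symm)
    rw [← heq]
    exact hN'mem
  have hEprops : ∀ ξ ∈ E, (∀ k, ∀ i ∈ N k, ∀ j ∈ N k, ξ i = ξ j) ∧
      (∀ j, (∀ k, j ∉ N k) → ξ j = 0) := by
    intro ξ hξ
    constructor
    · intro k i hi j hj
      exact (((hNmem k i).1 hi) ξ hξ).symm.trans (((hNmem k j).1 hj) ξ hξ)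
    · intro j hj
      by_contra h
      have hjS : j ∈ S := ⟨ξ, hξ, h⟩
      obtain ⟨i, hiM, hirel⟩ := hMex j hjS
      have hpi : p i := hiM
      apply hj (Nat.count p i)
      rw [hNmem]
      rw [hnth, Nat.nth_count hpi]
      exact hirel
  have hsumE : ∀ (s : Finset ℕ) (f : ℕ → ℕ → ℂ), (∀ i ∈ s, f i ∈ E) → ∑ i ∈ s, f i ∈ E := by
    intro s f hf
    exact Finset.sum_induction f (· ∈ E) (fun a b ha hb => hadd a ha b hb) hzero hf
  have happrox : ∀ ξ : ℕ → ℂ, inS ξ →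
      (∀ k, ∀ i ∈ N k, ∀ j ∈ N k, ξ i = ξ j) →
      (∀ j, (∀ k, j ∉ N k) → ξ j = 0) →
      ∀ q : ℕ, ∀ ε : ℝ, 0 < ε → ∃ η, (η ∈ E ∧
        η ∈ (Submodule.span ℂ (Set.range fun k => eNset (N k)) : Set (ℕ → ℂ))) ∧
        sNorm q (ξ - η) < ε := by
    intro ξ hξS hconst hvan q ε hε
    set F : ℕ → ℝ := fun j => ‖ξ j‖ ^ 2 * ((j : ℝ) + 1) ^ (2 * q) with hF
    have hFsum : Summable F := hξS q
    have hF0 : ∀ j, 0 ≤ F j := fun j => by positivity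
    obtain ⟨n, hn⟩ := ((tendsto_sum_nat_add F).eventually
      (gt_mem_nhds (show (0:ℝ) < ε ^ 2 by positivity))).exists
    set η : ℕ → ℂ := ∑ k ∈ Finset.range n, ξ (nth k) • eNset (N k) with hη
    have hηE : η ∈ E := hsumE _ _ (fun k _ => hsmul _ _ (hNE k))
    have hηspan : η ∈ (Submodule.span ℂ (Set.range fun k => eNset (N k)) : Set (ℕ → ℂ)) := by
      apply Submodule.sum_mem
      intro k _
      exact Submodule.smul_mem _ _ (Submodule.subset_span ⟨k, rfl⟩)
    have hηval : ∀ j, η j = ∑ k ∈ Finset.range n, ξ (nth k) * eNset (N k) j := by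
      intro j
      rw [hη, Finset.sum_apply]
      rfl
    have hdiff : ∀ j, (j < n → (ξ - η) j = 0) ∧ ‖(ξ - η) j‖ ≤ ‖ξ j‖ := by
      intro j
      rw [Pi.sub_apply]
      by_cases hex : ∃ k, j ∈ N k
      · obtain ⟨k₀, hk₀⟩ := hex
        have hother : ∀ k, k ≠ k₀ → j ∉ N k := by
          intro k hk hj
          exact Finset.disjoint_left.1 (hNdisj k k₀ hk) hj hk₀
        by_cases hk₀n : k₀ < n
        · have hval : η j = ξ j := by
            rw [hηval, Finset.sum_eq_single_of_mem k₀ (Finset.mem_range.2 hk₀n)]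
            · rw [eNset]
              simp only [if_pos hk₀, mul_one]
              exact hconst k₀ (nth k₀) ((hNmem k₀ (nth k₀)).2 (hrefl _)) j hk₀
            · intro k _ hk
              simp [eNset, hother k hk]
          rw [hval, sub_self]
          exact ⟨fun _ => rfl, by simp⟩
        · have hηj : η j = 0 := by
            rw [hηval]
            apply Finset.sum_eq_zero
            intro k hk
            have hkne : k ≠ k₀ := by rw [Finset.mem_range] at hk; omega
            simp [eNset, hother k hkne]
          have hjge : n ≤ j := by
            have h1 : nth k₀ ≤ j := (hnthM k₀).2 j ((hNmem k₀ j).1 hk₀)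
            have h2 : k₀ ≤ nth k₀ := hnthle k₀
            omega
          rw [hηj, sub_zero]
          exact ⟨fun h => absurd hjge (by omega), le_refl _⟩
      · push_neg at hex
        have h1 : ξ j = 0 := hvan j hex
        have h2 : η j = 0 := by
          rw [hηval]
          apply Finset.sum_eq_zero
          intro k _
          simp [eNset, hex k]
        rw [h1, h2, sub_zero]
        exact ⟨fun _ => rfl, by simp⟩
    refine ⟨η, ⟨hηE, hηspan⟩, ?_⟩
    set G : ℕ → ℝ := fun j => if j < n then 0 else F j with hG
    have hGle : ∀ j, G j ≤ F j := by
      intro j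
      rw [hG]
      dsimp only
      split
      · exact hF0 j
      · exact le_refl _
    have hG0 : ∀ j, 0 ≤ G j := by
      intro j
      rw [hG]
      dsimp only
      split
      · exact le_refl _
      · exact hF0 j
    have hGsum : Summable G := Summable.of_nonneg_of_le hG0 hGle hFsum
    apply sNorm_lt q _ ε hε G hGsum
    · intro j
      by_cases hj : j < n
      · rw [(hdiff j).1 hj]
        simp [hG, hj]
      · have hGj : G j = F j := by simp [hG, hj]
        rw [hGj, hF]
        apply mul_le_mul_of_nonneg_right _ (by positivity)
        exact pow_le_pow_left₀ (norm_nonneg _) (hdiff j).2 2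
    · rw [← Summable.sum_add_tsum_nat_add n hGsum]
      have hzero' : ∑ i ∈ Finset.range n, G i = 0 :=
        Finset.sum_eq_zero (fun i hi => by simp [hG, Finset.mem_range.1 hi])
      rw [hzero', zero_add]
      have hshift : ∀ i : ℕ, G (i + n) = F (i + n) := by
        intro i
        simp only [hG]
        rw [if_neg (by omega)]
      rw [tsum_congr hshift]
      exact hn
  set Esub : Submodule ℂ (ℕ → ℂ) :=
    { carrier := E
      add_mem' := fun ha hb => hadd _ ha _ hb
      zero_mem' := hzero
      smul_mem' := fun c x hx => hsmul c x hx } with hEsubdef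
  have hspanE : ∀ η, η ∈ (Submodule.span ℂ (Set.range fun k => eNset (N k)) :
      Set (ℕ → ℂ)) → η ∈ E := by
    intro η hη
    have hle : Submodule.span ℂ (Set.range fun k => eNset (N k)) ≤ Esub :=
      Submodule.span_le.2 (by rintro x ⟨k, rfl⟩; exact hNE k)
    exact hle hη
  refine ⟨N, ?_, hNdisj, ?_, hNE, ?_⟩
  · intro k
    exact ⟨nth k, (hNmem k (nth k)).2 (hrefl _)⟩
  · apply Set.eq_of_subset_of_subset
    · intro ξ hξ
      exact ⟨hEsub ξ hξ, (hEprops ξ hξ).1, (hEprops ξ hξ).2⟩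
    · rintro ξ ⟨h1, h2, h3⟩
      apply hclosed ξ h1
      intro q ε hε
      obtain ⟨η, ⟨hηE, _⟩, hlt⟩ := happrox ξ h1 h2 h3 q ε hε
      exact ⟨η, hηE, hlt⟩
  · apply Set.eq_of_subset_of_subset
    · intro ξ hξ
      refine ⟨hEsub ξ hξ, fun q ε hε => ?_⟩
      obtain ⟨η, ⟨_, hηsp⟩, hlt⟩ :=
        happrox ξ (hEsub ξ hξ) (hEprops ξ hξ).1 (hEprops ξ hξ).2 q ε hε
      exact ⟨η, hηsp, hlt⟩
    · rintro ξ ⟨h1, h2⟩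
      apply hclosed ξ h1
      intro q ε hε
      obtain ⟨η, hηsp, hlt⟩ := h2 q ε hε
      exact ⟨η, hspanE η hηsp, hlt⟩


end
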